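/- In the two-candidate reduced instance, for every W ⊆ V \ {u_1}: if W contains some vertex of {u_2, …, u_{ℓ(3m−1)}} ∪ {r}, then no vertex z with τ(z) = 1 is reachable from u_1 in the induced subgraph of G on V \ W (equivalently, H_W ∩ τ⁻¹(1) = ∅). -/
import Mathlib


/-- Vertices of the two-candidate reduced instance: the path vertices
`u_1, …, u_{ℓ(3m−1)}` (0-indexed as `u i` for `i : Fin (ℓ * (3 * m - 1))`, so `u_1` is
`u ⟨0, _⟩`), the vertex `r`, the vertices `v_1, …, v_m`, and the vertices `w_{j,k}` for
`j ∈ [m]`, `k ∈ [3ℓ]` (both 0-indexed). -/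
inductive V2 (ℓ m : ℕ) : Type
  | u (i : Fin (ℓ * (3 * m - 1))) : V2 ℓ m
  | r : V2 ℓ m
  | v (i : Fin m) : V2 ℓ m
  | w (j : Fin m) (k : Fin (3 * ℓ)) : V2 ℓ m
  deriving DecidableEq

/-- Base edge relation of the two-candidate reduced instance: `u_i ~ u_{i+1}`,
`u_{ℓ(3m−1)} ~ r`, `r ~ v_i` for all `i`, and `v_i ~ w_{j,k}` iff `k ∈ S i`. -/
def baseRel2 (ℓ m : ℕ) (S : Fin m → Finset (Fin (3 * ℓ))) :
    V2 ℓ m → V2 ℓ m → Prop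
  | .u i, .u i' => (i : ℕ) + 1 = (i' : ℕ)
  | .u i, .r => (i : ℕ) + 1 = ℓ * (3 * m - 1)
  | .r, .v _ => True
  | .v i, .w _ k => k ∈ S i
  | _, _ => False

/-- The graph of the two-candidate reduced instance. -/
def G2 (ℓ m : ℕ) (S : Fin m → Finset (Fin (3 * ℓ))) : SimpleGraph (V2 ℓ m) :=
  SimpleGraph.fromRel (baseRel2 ℓ m S)

/-- The voting function of the two-candidate reduced instance: `u`'s and `v`'s vote for
candidate `0`; `r` and the `w`'s vote for candidate `1`. -/
def τ2 (ℓ m : ℕ) : V2 ℓ m → Fin 2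
  | .u _ => 0
  | .r => 1
  | .v _ => 0
  | .w _ _ => 1

/-- The distinguished vertex `x = u_1`. -/
def x2 (ℓ m : ℕ) (h : 0 < ℓ * (3 * m - 1)) : V2 ℓ m := V2.u ⟨0, h⟩

/-- `HW G W x`: the set of vertices reachable from `x` in the subgraph of `G` induced on
the complement of `W` (each step of a connecting walk must avoid `W`). -/
def HW {V : Type*} (G : SimpleGraph V) (W : Set V) (x : V) : Set V :=
  {z | Relation.ReflTransGen (fun a b => G.Adj a b ∧ a ∉ W ∧ b ∉ W) x z}

/-- With two candidates, candidate `1` uniquely wins the election restricted to `W` iff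
`|H_W ∩ τ⁻¹(1)| > |H_W ∩ τ⁻¹(0)|`. -/
def wins2 (ℓ m : ℕ) (S : Fin m → Finset (Fin (3 * ℓ))) (x : V2 ℓ m)
    (W : Set (V2 ℓ m)) : Prop :=
  (HW (G2 ℓ m S) W x ∩ τ2 ℓ m ⁻¹' {0}).ncard <
    (HW (G2 ℓ m S) W x ∩ τ2 ℓ m ⁻¹' {1}).ncard

/-- If the deletion set `W` contains one of `u_2, …, u_{ℓ(3m−1)}` or `r`, then no voter
for candidate `1` is reachable from `u_1` in the induced subgraph on the complement of
`W`. -/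

lemma reach_u (ℓ m : ℕ) (S : Fin m → Finset (Fin (3 * ℓ)))
    (W : Set (V2 ℓ m)) (i0 : ℕ) (hi0 : 1 ≤ i0)
    (h0 : 0 < ℓ * (3 * m - 1))
    (hblock : ∀ j : Fin (ℓ * (3 * m - 1)), (j : ℕ) = i0 → V2.u j ∈ W)
    (hr : i0 < ℓ * (3 * m - 1) ∨ V2.r ∈ W) :
    ∀ z ∈ HW (G2 ℓ m S) W (V2.u ⟨0, h0⟩),
      ∃ j : Fin (ℓ * (3 * m - 1)), (j : ℕ) < i0 ∧ z = V2.u j := by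
  intro z hz
  induction hz with
  | refl => exact ⟨⟨0, h0⟩, hi0, rfl⟩
  | @tail b c hab hstep ih =>
    obtain ⟨j, hj, rfl⟩ := ih
    obtain ⟨hadj, ha, hb⟩ := hstep
    rw [G2, SimpleGraph.fromRel_adj] at hadj
    obtain ⟨hne, hrel | hrel⟩ := hadj
    · cases c with
      | u j' =>
        simp only [baseRel2] at hrel
        refine ⟨j', ?_, rfl⟩
        rcases Nat.lt_or_ge (j' : ℕ) i0 with h | h
        · exact h
        · exact absurd (hblock j' (by omega)) hb
      | r =>
        simp only [baseRel2] at hrel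
        exfalso
        rcases hr with h | h
        · have := j.isLt; omega
        · exact hb h
      | v i => simp [baseRel2] at hrel
      | w j k => simp [baseRel2] at hrel
    · cases c with
      | u j' =>
        simp only [baseRel2] at hrel
        exact ⟨j', by omega, rfl⟩
      | r => simp [baseRel2] at hrel
      | v i => simp [baseRel2] at hrel
      | w j k => simp [baseRel2] at hrel

theorem no_one_voter_reachable (ℓ m : ℕ) (hℓ : 1 ≤ ℓ) (hm : 1 ≤ m)
    (S : Fin m → Finset (Fin (3 * ℓ)))
    (hS3 : ∀ i, (S i).card = 3)
    (hcov : Finset.univ.biUnion S = Finset.univ)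
    (W : Set (V2 ℓ m)) (hW : x2 ℓ m (Nat.mul_pos hℓ (by omega)) ∉ W)
    (hhit : ∃ z ∈ W, (∃ i : Fin (ℓ * (3 * m - 1)), 1 ≤ (i : ℕ) ∧ z = V2.u i) ∨ z = V2.r) :
    HW (G2 ℓ m S) W (x2 ℓ m (Nat.mul_pos hℓ (by omega))) ∩ τ2 ℓ m ⁻¹' {1} = ∅ :=  by
  have h0 : 0 < ℓ * (3 * m - 1) := Nat.mul_pos hℓ (by omega)
  obtain ⟨z, hzW, hz⟩ := hhit
  rw [Set.eq_empty_iff_forall_notMem]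
  rintro y ⟨hy1, hy2⟩
  have key : ∃ j : Fin (ℓ * (3 * m - 1)), y = V2.u j := by
    rcases hz with ⟨i, hi1, rfl⟩ | rfl
    · obtain ⟨j, _, rfl⟩ := reach_u ℓ m S W (i : ℕ) hi1 h0
        (fun j hj => by
          have : j = i := Fin.ext hj
          exact this ▸ hzW)
        (Or.inl i.isLt) y hy1
      exact ⟨j, rfl⟩
    · obtain ⟨j, _, rfl⟩ := reach_u ℓ m S W (ℓ * (3 * m - 1)) h0 h0
        (fun j hj => absurd j.isLt (by omega))
        (Or.inr hzW) y hy1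
      exact ⟨j, rfl⟩
  obtain ⟨j, rfl⟩ := key
  simp [τ2] at hy2
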